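/- The category of cochain complexes of R-modules has enough pure injective objects: every complex X admits a pure monomorphism into a pure injective complex, given by the canonical map X → X^{++} with respect to degreewise dualization by an injective cogenerator J. -/

import Mathlib

open TensorProduct LinearMap

section Defs
variable (R : Type) [CommRing R]

/-- `f, g` form a short exact sequence `0 → A → B → C → 0`. -/
def ShortExactSeq {A B C : Type} [AddCommGroup A] [AddCommGroup B] [AddCommGroup C]
    [Module R A] [Module R B] [Module R C] (f : A →ₗ[R] B) (g : B →ₗ[R] C) : Prop :=
  Function.Injective f ∧ Function.Exact f g ∧ Function.Surjective g

/-- The short exact sequence stays exact after tensoring with any module: purity. -/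
def IsPureSeq {A B C : Type} [AddCommGroup A] [AddCommGroup B] [AddCommGroup C]
    [Module R A] [Module R B] [Module R C] (f : A →ₗ[R] B) (g : B →ₗ[R] C) : Prop :=
  ∀ (M : Type) [AddCommGroup M] [Module R M],
    ShortExactSeq R (f.lTensor M) (g.lTensor M)

/-- Pure injectivity: maps into `E` extend along pure monomorphisms. -/
def IsPureInjective (E : Type) [AddCommGroup E] [Module R E] : Prop :=
  ∀ (A B C : Type) [AddCommGroup A] [AddCommGroup B] [AddCommGroup C]
    [Module R A] [Module R B] [Module R C] (f : A →ₗ[R] B) (g : B →ₗ[R] C),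
    ShortExactSeq R f g → IsPureSeq R f g →
    ∀ h : A →ₗ[R] E, ∃ h' : B →ₗ[R] E, h'.comp f = h

/-- `J` is an injective cogenerator: it is injective and `Hom(-, J)` is faithful. -/
def IsInjectiveCogenerator (J : Type) [AddCommGroup J] [Module R J] : Prop :=
  Module.Injective R J ∧
  ∀ (M : Type) [AddCommGroup M] [Module R M], (∀ φ : M →ₗ[R] J, φ = 0) → Subsingleton M

/-- The canonical evaluation map `λ_F : F → Hom(Hom(F, J), J)`, `x ↦ (φ ↦ φ x)`. -/
noncomputable def lamMap (J : Type) [AddCommGroup J] [Module R J]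
    (F : Type) [AddCommGroup F] [Module R F] : F →ₗ[R] ((F →ₗ[R] J) →ₗ[R] J) :=
  LinearMap.applyₗ

end Defs


section Complexes

variable (R : Type) [CommRing R]

/-- A cochain complex of `R`-modules (differential raising degree). -/
structure Cx where
  X : ℤ → Type
  [acg : ∀ n, AddCommGroup (X n)]
  [mod : ∀ n, Module R (X n)]
  d : ∀ n : ℤ, X n →ₗ[R] X (n + 1)
  dd : ∀ n : ℤ, (d (n + 1)).comp (d n) = 0

/-- A chain complex of `R`-modules (differential lowering degree). -/
structure DCx where
  X : ℤ → Type
  [acg : ∀ n, AddCommGroup (X n)]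
  [mod : ∀ n, Module R (X n)]
  d : ∀ n : ℤ, X (n + 1) →ₗ[R] X n
  dd : ∀ n : ℤ, (d n).comp (d (n + 1)) = 0

attribute [instance] Cx.acg Cx.mod DCx.acg DCx.mod

variable {R}

/-- Morphisms of cochain complexes. -/
@[ext] structure CxHom (A B : Cx R) where
  f : ∀ n : ℤ, A.X n →ₗ[R] B.X n
  comm : ∀ n : ℤ, (B.d n).comp (f n) = (f (n + 1)).comp (A.d n)

/-- Morphisms of chain complexes. -/
@[ext] structure DCxHom (A B : DCx R) where
  f : ∀ n : ℤ, A.X n →ₗ[R] B.X n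
  comm : ∀ n : ℤ, (B.d n).comp (f (n + 1)) = (f n).comp (A.d n)

variable (J : Type) [AddCommGroup J] [Module R J]

/-- The degreewise dual of a cochain complex is a chain complex. -/
noncomputable def Cx.dual (A : Cx R) : DCx R where
  X n := A.X n →ₗ[R] J
  d n := LinearMap.lcomp R J (A.d n)
  dd n := by
    ext φ x
    have h := LinearMap.congr_fun (A.dd n) x
    simp only [LinearMap.comp_apply, LinearMap.zero_apply] at h ⊢
    simp [LinearMap.lcomp_apply, h]

/-- The degreewise dual of a chain complex is a cochain complex. -/
noncomputable def DCx.dual (E : DCx R) : Cx R where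
  X n := E.X n →ₗ[R] J
  d n := LinearMap.lcomp R J (E.d n)
  dd n := by
    ext φ x
    have h := LinearMap.congr_fun (E.dd n) x
    simp only [LinearMap.comp_apply, LinearMap.zero_apply] at h ⊢
    simp [LinearMap.lcomp_apply, h]

/-- The double dual of a cochain complex. -/
noncomputable def Cx.ddual (A : Cx R) : Cx R := (A.dual J).dual J

/-- The dual of a morphism of cochain complexes. -/
noncomputable def CxHom.dual {A B : Cx R} (h : CxHom A B) :
    DCxHom (B.dual J) (A.dual J) where
  f n := LinearMap.lcomp R J (h.f n)
  comm n := by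
    refine LinearMap.ext fun φ => LinearMap.ext fun x => ?_
    have hc := LinearMap.congr_fun (h.comm n) x
    simp only [LinearMap.comp_apply] at hc
    simp only [LinearMap.comp_apply, Cx.dual, LinearMap.lcomp_apply]
    exact congrArg (fun y => (show B.X (n + 1) →ₗ[R] J from φ) y) hc.symm

/-- The canonical evaluation chain map `X → X⁺⁺`. -/
noncomputable def lamCx (A : Cx R) : CxHom A (A.ddual J) where
  f n := lamMap R J (A.X n)
  comm n := by
    refine LinearMap.ext fun x => LinearMap.ext fun φ => rfl

/-- A degreewise short exact sequence of cochain complexes (a conflation). -/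
def CxSES {A B C : Cx R} (u : CxHom A B) (v : CxHom B C) : Prop :=
  ∀ n : ℤ, ShortExactSeq R (u.f n) (v.f n)

/-- A conflation of complexes is pure if its degreewise dual splits (as complexes). -/
noncomputable def CxPure {A B C : Cx R} (u : CxHom A B) (v : CxHom B C) : Prop :=
  ∃ r : DCxHom (B.dual J) (C.dual J),
    ∀ n : ℤ, (r.f n).comp ((v.dual J).f n) = LinearMap.id

/-- A complex `E` is pure injective if maps into it extend along pure conflations. -/
noncomputable def CxPureInjective (E : Cx R) : Prop :=
  ∀ (A B C : Cx R) (u : CxHom A B) (v : CxHom B C),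
    CxSES u v → CxPure J u v →
    ∀ h : CxHom A E, ∃ h' : CxHom B E, ∀ n : ℤ, (h'.f n).comp (u.f n) = h.f n

end Complexes


section Aux

variable {R : Type} [CommRing R] {J : Type} [AddCommGroup J] [Module R J]

/-- Identity cast unfolding the double dual in each degree. -/
def ddCast (X : Cx R) (m : ℤ) :
    (X.ddual J).X m → ((X.X m →ₗ[R] J) →ₗ[R] J) := fun x => x

/-- If `J` is an injective cogenerator, the evaluation map into the double dual is
injective. -/
lemma lamMap_injective (hJ : IsInjectiveCogenerator R J)
    (F : Type) [AddCommGroup F] [Module R F] :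
    Function.Injective (lamMap R J F) := by
  obtain ⟨hinj, hcog⟩ := hJ
  have key : ∀ x : F, lamMap R J F x = 0 → x = 0 := by
    intro x hx
    set M := Submodule.span R ({x} : Set F)
    have hsub : ∀ ξ : M →ₗ[R] J, ξ = 0 := by
      intro ξ
      obtain ⟨φ, hφ⟩ := hinj.out M.subtype (Submodule.injective_subtype M) ξ
      ext m
      obtain ⟨c, hc⟩ := Submodule.mem_span_singleton.mp m.2
      have : (m : F) = c • x := hc.symm
      have hφx : φ x = 0 := by
        have := LinearMap.congr_fun hx φ
        simpa [lamMap] using this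
      calc ξ m = φ (m : F) := (hφ m).symm
        _ = c • φ x := by rw [this, map_smul]
        _ = 0 := by rw [hφx, smul_zero]
    have hM : Subsingleton M := hcog M hsub
    have : (⟨x, Submodule.mem_span_singleton_self x⟩ : M) = 0 := Subsingleton.elim _ _
    exact congrArg Subtype.val this
  intro a b hab
  have : lamMap R J F (a - b) = 0 := by rw [map_sub, hab, sub_self]
  have := key _ this
  exact sub_eq_zero.mp this

/-- Given a pure short exact sequence (split after dualizing) with `J` injective,
there is a canonical linear section `T` of restriction along `f` on `J`-duals,
characterized by being killed by the retraction `q`. -/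
lemma exists_T (hJinj : Module.Injective R J)
    {A B C : Type} [AddCommGroup A] [AddCommGroup B] [AddCommGroup C]
    [Module R A] [Module R B] [Module R C]
    (f : A →ₗ[R] B) (g : B →ₗ[R] C) (hse : ShortExactSeq R f g)
    (q : (B →ₗ[R] J) →ₗ[R] (C →ₗ[R] J))
    (hq : q.comp (LinearMap.lcomp R J g) = LinearMap.id) :
    ∃ T : (A →ₗ[R] J) →ₗ[R] (B →ₗ[R] J),
      (∀ ψ, (T ψ).comp f = ψ ∧ q (T ψ) = 0) ∧
      (∀ ψ (β : B →ₗ[R] J), β.comp f = ψ → q β = 0 → β = T ψ) := by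
  obtain ⟨hf, hex, hg⟩ := hse
  have hgf : ∀ a, g (f a) = 0 := fun a => hex.apply_apply_eq_zero a
  -- factoring through g
  have factor : ∀ χ : B →ₗ[R] J, χ.comp f = 0 → ∃ χ' : C →ₗ[R] J, χ'.comp g = χ := by
    intro χ hχ
    have hker : LinearMap.ker g ≤ LinearMap.ker χ := by
      intro b hb
      rw [LinearMap.mem_ker] at hb
      obtain ⟨a, ha⟩ := (hex b).mp hb
      have := LinearMap.congr_fun hχ a
      simp only [LinearMap.comp_apply, LinearMap.zero_apply] at this
      simpa [LinearMap.mem_ker, ha] using this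
    refine ⟨(LinearMap.ker g).liftQ χ hker ∘ₗ
      (g.quotKerEquivOfSurjective hg).symm.toLinearMap, ?_⟩
    ext b
    have hb : (g.quotKerEquivOfSurjective hg).symm (g b) =
        Submodule.Quotient.mk b := by
      apply (g.quotKerEquivOfSurjective hg).injective
      simp [LinearMap.quotKerEquivOfSurjective]
    simp [hb]
  -- the projector
  set P : (B →ₗ[R] J) →ₗ[R] (B →ₗ[R] J) :=
    LinearMap.id - (LinearMap.lcomp R J g).comp q with hP
  have hqfix : ∀ χ' : C →ₗ[R] J, q (χ'.comp g) = χ' := fun χ' =>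
    LinearMap.congr_fun hq χ'
  have Pindep : ∀ ψ₁ ψ₂ : B →ₗ[R] J, ψ₁.comp f = ψ₂.comp f → P ψ₁ = P ψ₂ := by
    intro ψ₁ ψ₂ h12
    have hz : P (ψ₁ - ψ₂) = 0 := by
      obtain ⟨χ', hχ'⟩ := factor (ψ₁ - ψ₂) (by rw [LinearMap.sub_comp, h12, sub_self])
      have hl : (LinearMap.lcomp R J g) χ' = ψ₁ - ψ₂ := hχ'
      rw [hP]
      simp only [LinearMap.sub_apply, LinearMap.id_apply, LinearMap.comp_apply]
      have hqχ : q ((LinearMap.lcomp R J g) χ') = χ' := LinearMap.congr_fun hq χ'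
      rw [← hl, hqχ, sub_self]
    have h2 : P ψ₁ - P ψ₂ = 0 := (map_sub P ψ₁ ψ₂) ▸ hz
    exact sub_eq_zero.mp h2
  -- extension operator by choice
  have ext_ex : ∀ ψ : A →ₗ[R] J, ∃ ψ' : B →ₗ[R] J, ψ'.comp f = ψ := by
    intro ψ
    obtain ⟨ψ', hψ'⟩ := hJinj.out f hf ψ
    exact ⟨ψ', LinearMap.ext hψ'⟩
  choose E hE using ext_ex
  have Tfun : ∀ ψ₁ ψ₂ : A →ₗ[R] J, ∀ β : B →ₗ[R] J, β.comp f = ψ₁ + ψ₂ →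
      P β = P (E ψ₁) + P (E ψ₂) := by
    intro ψ₁ ψ₂ β hβ
    rw [← map_add, Pindep β (E ψ₁ + E ψ₂) (by rw [LinearMap.add_comp, hE, hE, hβ])]
  refine ⟨{ toFun := fun ψ => P (E ψ)
            map_add' := by
              intro ψ₁ ψ₂
              exact Tfun ψ₁ ψ₂ (E (ψ₁ + ψ₂)) (hE _)
            map_smul' := by
              intro c ψ
              simp only [RingHom.id_apply]
              rw [← map_smul]
              exact Pindep _ _ (by rw [LinearMap.smul_comp, hE, hE]) }, ?_, ?_⟩
  · intro ψ
    constructor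
    · show (P (E ψ)).comp f = ψ
      have : ((LinearMap.lcomp R J g) (q (E ψ))).comp f = 0 := by
        ext a
        simp [LinearMap.lcomp_apply, hgf a]
      rw [hP]
      simp only [LinearMap.sub_apply, LinearMap.id_apply, LinearMap.comp_apply,
        LinearMap.sub_comp]
      rw [this, sub_zero, hE]
    · show q (P (E ψ)) = 0
      rw [hP]
      simp only [LinearMap.sub_apply, LinearMap.id_apply, LinearMap.comp_apply, map_sub]
      have hqχ : q ((LinearMap.lcomp R J g) (q (E ψ))) = q (E ψ) :=
        LinearMap.congr_fun hq (q (E ψ))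
      rw [hqχ, sub_self]
  · intro ψ β hβf hβq
    show β = P (E ψ)
    rw [Pindep (E ψ) β (by rw [hE, hβf])]
    rw [hP]
    simp only [LinearMap.sub_apply, LinearMap.id_apply, LinearMap.comp_apply]
    rw [hβq, map_zero, sub_zero]

end Aux


/-- the category of cochain complexes of `R`-modules has enough pure
injective objects: the canonical map `X → X⁺⁺` is a pure monomorphism (degreewise
injective with split dual) into the pure injective complex `X⁺⁺`. -/
theorem stmt17 (R : Type) [CommRing R] (J : Type) [AddCommGroup J] [Module R J]
    (hJ : IsInjectiveCogenerator R J) (X : Cx R) :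
    (∀ n : ℤ, Function.Injective ((lamCx J X).f n)) ∧
    (∃ s : DCxHom (X.dual J) ((X.ddual J).dual J),
      ∀ n : ℤ, (((lamCx J X).dual J).f n).comp (s.f n) = LinearMap.id) ∧
    CxPureInjective J (X.ddual J) := by
  refine ⟨fun n => lamMap_injective hJ (X.X n), ?_, ?_⟩
  · -- the section of the dual of the double-dual map
    refine ⟨{ f := fun n => lamMap R J ((X.dual J).X n)
              comm := fun n => by
                refine LinearMap.ext fun φ => LinearMap.ext fun Φ => rfl }, fun n => ?_⟩
    refine LinearMap.ext fun φ => LinearMap.ext fun x => rfl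
  · -- pure injectivity of the double dual
    intro A B C u v hses hpure h
    obtain ⟨r, hr⟩ := hpure
    -- choose the canonical section T n at each degree
    have hTn : ∀ n : ℤ, ∃ T : (A.X n →ₗ[R] J) →ₗ[R] (B.X n →ₗ[R] J),
        (∀ ψ, (T ψ).comp (u.f n) = ψ ∧ r.f n (T ψ) = 0) ∧
        (∀ ψ (β : B.X n →ₗ[R] J), β.comp (u.f n) = ψ → r.f n β = 0 → β = T ψ) := by
      intro n
      exact exists_T hJ.1 (u.f n) (v.f n) (hses n) (r.f n) (hr n)
    choose T hT1 hT2 using hTn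
    -- T is a chain map A⁺ → B⁺
    have Tcomm : ∀ n : ℤ, ∀ ψ : A.X (n + 1) →ₗ[R] J,
        ((B.dual J).d n) (T (n + 1) ψ) = (T n) (((A.dual J).d n) ψ) := by
      intro n ψ
      refine hT2 n _ _ ?_ ?_
      · -- restriction along u
        have e1 : ((B.dual J).d n) (T (n + 1) ψ) = (T (n + 1) ψ).comp (B.d n) := rfl
        have e2 : ((A.dual J).d n) ψ = ψ.comp (A.d n) := rfl
        rw [e1, e2, LinearMap.comp_assoc, u.comm n, ← LinearMap.comp_assoc,
          (hT1 (n + 1) ψ).1]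
      · -- killed by the retraction r
        have hrc : ((C.dual J).d n) ((r.f (n + 1)) (T (n + 1) ψ))
            = (r.f n) (((B.dual J).d n) (T (n + 1) ψ)) :=
          LinearMap.congr_fun (r.comm n) (T (n + 1) ψ)
        rw [← hrc, (hT1 (n + 1) ψ).2, map_zero]
    -- the lift
    refine ⟨{ f := fun n => ((T n).comp (h.f n).flip).flip
              comm := fun n => ?_ }, fun n => ?_⟩
    · refine LinearMap.ext fun b => LinearMap.ext fun φ => ?_
      show (T n) ((h.f n).flip (((X.dual J).d n) φ)) b
          = (T (n + 1)) ((h.f (n + 1)).flip φ) ((B.d n) b)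
      have hAd : ((A.dual J).d n) ((h.f (n + 1)).flip φ)
          = (h.f n).flip (((X.dual J).d n) φ) := by
        have e1 : ((A.dual J).d n) ((h.f (n + 1)).flip φ)
            = ((h.f (n + 1)).flip φ).comp (A.d n) := rfl
        have e2 : ((X.dual J).d n) φ = φ.comp (X.d n) := rfl
        rw [e1, e2]
        refine LinearMap.ext fun a => ?_
        have hc : ddCast X (n + 1) (((X.ddual J).d n) ((h.f n) a))
            = ddCast X (n + 1) ((h.f (n + 1)) ((A.d n) a)) :=
          congrArg (ddCast X (n + 1)) (LinearMap.congr_fun (h.comm n) a)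
        calc (((h.f (n + 1)).flip φ).comp (A.d n)) a
            = ddCast X (n + 1) ((h.f (n + 1)) ((A.d n) a)) φ := rfl
          _ = ddCast X (n + 1) (((X.ddual J).d n) ((h.f n) a)) φ := by rw [hc]
          _ = ddCast X n ((h.f n) a) (φ.comp (X.d n)) := rfl
          _ = ((h.f n).flip (φ.comp (X.d n))) a := rfl
      rw [← hAd, ← Tcomm n ((h.f (n + 1)).flip φ)]
      rfl
    · refine LinearMap.ext fun a => LinearMap.ext fun φ => ?_
      show (T n) ((h.f n).flip φ) ((u.f n) a) = ddCast X n ((h.f n) a) φ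
      have e2 : (T n) ((h.f n).flip φ) ((u.f n) a) = ((h.f n).flip φ) a :=
        LinearMap.congr_fun (hT1 n ((h.f n).flip φ)).1 a
      rw [e2]
      rfl
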